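/- arXiv:2603.02820 — 4 statements merged into one kernel-verified Lean document; each statement's English description precedes it below -/
import Mathlib

section
/- Let σ, σ_β, κ > 0 and β̄, δ, r ∈ ℝ, and consider the vector fields on ℝ² given by V⁰(z,β) = ( z(β² - σσ_β + 2σ²(δ-r))/(2σ²), (βσ_β + κσ(β̄-β))/σ ) and V¹(z,β) = ( -(β/σ)z, -σ_β ). Then the Lie bracket [V⁰,V¹](z,β) := DV¹(z,β)·V⁰(z,β) - DV⁰(z,β)·V¹(z,β) equals ( -(zκ(β̄-β))/σ, -(σ_β/σ)(κσ - σ_β) ) for every (z,β) ∈ ℝ². -/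
/-- The Stratonovich-corrected drift vector field of the diffusion `(Ẑ, β̂)`. -/
noncomputable def driftVF (σ σβ κ βbar δ r : ℝ) : ℝ × ℝ → ℝ × ℝ :=
  fun p => (p.1 * (p.2 ^ 2 - σ * σβ + 2 * σ ^ 2 * (δ - r)) / (2 * σ ^ 2),
            (p.2 * σβ + κ * σ * (βbar - p.2)) / σ)

/-- The diffusion vector field of the diffusion `(Ẑ, β̂)`. -/
noncomputable def diffusionVF (σ σβ : ℝ) : ℝ × ℝ → ℝ × ℝ :=
  fun p => (-(p.2 / σ) * p.1, -σβ)

/-- The Lie bracket `[V⁰,V¹] = DV¹·V⁰ - DV⁰·V¹` of the drift and diffusion vector fields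
equals `( -(zκ(β̄-β))/σ , -(σ_β/σ)(κσ - σ_β) )` at every point `(z,β) ∈ ℝ²`. -/
theorem stmt1 (σ σβ κ βbar δ r : ℝ) (hσ : 0 < σ) (hσβ : 0 < σβ) (hκ : 0 < κ)
    (p : ℝ × ℝ) :
    fderiv ℝ (diffusionVF σ σβ) p (driftVF σ σβ κ βbar δ r p)
      - fderiv ℝ (driftVF σ σβ κ βbar δ r) p (diffusionVF σ σβ p)
      = (-(p.1 * κ * (βbar - p.2)) / σ, -(σβ / σ) * (κ * σ - σβ)) := by
  have hfst : HasFDerivAt (fun q : ℝ × ℝ => q.1)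
      (ContinuousLinearMap.fst ℝ ℝ ℝ) p := hasFDerivAt_fst
  have hsnd : HasFDerivAt (fun q : ℝ × ℝ => q.2)
      (ContinuousLinearMap.snd ℝ ℝ ℝ) p := hasFDerivAt_snd
  have he1 : diffusionVF σ σβ = fun q : ℝ × ℝ => (-(q.2 * σ⁻¹) * q.1, -σβ) := by
    funext q; simp [diffusionVF, div_eq_mul_inv]
  have he0 : driftVF σ σβ κ βbar δ r = fun q : ℝ × ℝ =>
      (q.1 * (q.2 * q.2 - σ * σβ + 2 * σ ^ 2 * (δ - r)) * (2 * σ ^ 2)⁻¹,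
       (q.2 * σβ + (κ * σ * βbar - q.2 * (κ * σ))) * σ⁻¹) := by
    funext q; simp only [driftVF, div_eq_mul_inv]; ring_nf
  have hd1 := HasFDerivAt.prodMk ((hsnd.mul_const σ⁻¹).neg.mul hfst) (hasFDerivAt_const (-σβ) p)
  have hd0 := HasFDerivAt.prodMk (HasFDerivAt.mul_const (hfst.mul (((hsnd.mul hsnd).sub_const (σ * σβ)).add_const
        (2 * σ ^ 2 * (δ - r)))) (2 * σ ^ 2)⁻¹)
      (((hsnd.mul_const σβ).add ((hasFDerivAt_const (κ * σ * βbar) p).sub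
        (hsnd.mul_const (κ * σ)))).mul_const σ⁻¹)
  rw [he1, he0, HasFDerivAt.fderiv (f := fun q : ℝ × ℝ => (-(q.2 * σ⁻¹) * q.1, -σβ)) hd1,
    HasFDerivAt.fderiv (f := fun q : ℝ × ℝ =>
      (q.1 * (q.2 * q.2 - σ * σβ + 2 * σ ^ 2 * (δ - r)) * (2 * σ ^ 2)⁻¹,
       (q.2 * σβ + (κ * σ * βbar - q.2 * (κ * σ))) * σ⁻¹)) hd0]
  simp only [ContinuousLinearMap.coe_sub', Pi.sub_apply, ContinuousLinearMap.prod_apply,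
    ContinuousLinearMap.smul_apply, ContinuousLinearMap.add_apply, ContinuousLinearMap.neg_apply,
    ContinuousLinearMap.coe_fst', ContinuousLinearMap.coe_snd', ContinuousLinearMap.zero_apply,
    ContinuousLinearMap.coe_comp', Function.comp_apply, smul_eq_mul, Prod.mk_sub_mk]
  refine Prod.ext ?_ ?_ <;> simp <;> field_simp <;> ring
end

section
/- Let σ, σ_β, κ > 0 and β̄, δ, r ∈ ℝ, and consider the vector fields on ℝ² given by V⁰(z,β) = ( z(β² - σσ_β + 2σ²(δ-r))/(2σ²), (βσ_β + κσ(β̄-β))/σ ) and V¹(z,β) = ( -(β/σ)z, -σ_β ). Then the iterated Lie bracket satisfies [V¹,[V⁰,V¹]](z,β) = ( -(σ_β z/σ²)(2κσ - σ_β), 0 ), and the determinant of the 2×2 matrix with columns V¹(z,β) and [V¹,[V⁰,V¹]](z,β) equals -(σ_β² z/σ²)(2κσ - σ_β). In particular, if κσ > σ_β and z > 0, this determinant is strictly negative, so the vectors V¹(z,β) and [V¹,[V⁰,V¹]](z,β) are linearly independent and span ℝ². -/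
/-- The Lie bracket `[V,U] = DU·V - DV·U` of two vector fields on `ℝ²`. -/
noncomputable def lieBracketVF (V U : ℝ × ℝ → ℝ × ℝ) : ℝ × ℝ → ℝ × ℝ :=
  fun p => fderiv ℝ U p (V p) - fderiv ℝ V p (U p)

lemma fderivF (g h g' h' : ℝ → ℝ) (hg : ∀ x, HasDerivAt g (g' x) x)
    (hh : ∀ x, HasDerivAt h (h' x) x) (p v : ℝ × ℝ) :
    fderiv ℝ (fun q : ℝ × ℝ => (q.1 * g q.2, h q.2)) p v
      = (v.1 * g p.2 + p.1 * (g' p.2 * v.2), h' p.2 * v.2) := by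
  have hG : HasFDerivAt (fun q : ℝ × ℝ => g q.2)
      ((g' p.2) • (ContinuousLinearMap.snd ℝ ℝ ℝ)) p :=
    (hg p.2).comp_hasFDerivAt p hasFDerivAt_snd
  have hH : HasFDerivAt (fun q : ℝ × ℝ => h q.2)
      ((h' p.2) • (ContinuousLinearMap.snd ℝ ℝ ℝ)) p :=
    (hh p.2).comp_hasFDerivAt p hasFDerivAt_snd
  have h1 : HasFDerivAt (fun q : ℝ × ℝ => (q.1 * g q.2, h q.2)) _ p :=
    HasFDerivAt.prodMk (hasFDerivAt_fst.mul hG) hH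
  rw [h1.fderiv]
  simp [Prod.ext_iff]
  ring

lemma bracketF (g1 h1 g2 h2 g1' h1' g2' h2' : ℝ → ℝ)
    (hg1 : ∀ x, HasDerivAt g1 (g1' x) x) (hh1 : ∀ x, HasDerivAt h1 (h1' x) x)
    (hg2 : ∀ x, HasDerivAt g2 (g2' x) x) (hh2 : ∀ x, HasDerivAt h2 (h2' x) x)
    (p : ℝ × ℝ) :
    lieBracketVF (fun q => (q.1 * g1 q.2, h1 q.2)) (fun q => (q.1 * g2 q.2, h2 q.2)) p
      = (p.1 * (g2' p.2 * h1 p.2 - g1' p.2 * h2 p.2),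
         h2' p.2 * h1 p.2 - h1' p.2 * h2 p.2) := by
  simp only [lieBracketVF, fderivF g1 h1 g1' h1' hg1 hh1,
    fderivF g2 h2 g2' h2' hg2 hh2, Prod.mk_sub_mk, Prod.ext_iff]
  exact ⟨by ring, trivial⟩

lemma iteratedBracket (σ σβ κ βbar δ r : ℝ) (hσ : σ ≠ 0) (p : ℝ × ℝ) :
    lieBracketVF (diffusionVF σ σβ)
        (lieBracketVF (driftVF σ σβ κ βbar δ r) (diffusionVF σ σβ)) p
      = (-(σβ * p.1 / σ ^ 2) * (2 * κ * σ - σβ), 0) := by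
  -- F-forms
  have hdiff : diffusionVF σ σβ
      = fun q : ℝ × ℝ => (q.1 * (-(q.2 / σ)), (fun _ : ℝ => -σβ) q.2) := by
    funext q; simp [diffusionVF]; ring
  have hdrift : driftVF σ σβ κ βbar δ r
      = fun q : ℝ × ℝ => (q.1 * ((q.2 ^ 2 - σ * σβ + 2 * σ ^ 2 * (δ - r)) / (2 * σ ^ 2)),
          (q.2 * σβ + κ * σ * (βbar - q.2)) / σ) := by
    funext q; simp [driftVF, Prod.ext_iff]; ring
  -- derivatives
  have hg2 : ∀ x : ℝ, HasDerivAt (fun x : ℝ => -(x / σ)) (-(1 / σ)) x := by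
    intro x; exact ((hasDerivAt_id x).div_const σ).neg.congr_deriv (by simp)
  have hh2 : ∀ x : ℝ, HasDerivAt (fun _ : ℝ => -σβ) (0 : ℝ) x := fun x => hasDerivAt_const x _
  have hg1 : ∀ x : ℝ, HasDerivAt
      (fun x : ℝ => (x ^ 2 - σ * σβ + 2 * σ ^ 2 * (δ - r)) / (2 * σ ^ 2)) (x / σ ^ 2) x := by
    intro x
    have := (((hasDerivAt_pow 2 x).sub_const (σ * σβ)).add_const
      (2 * σ ^ 2 * (δ - r))).div_const (2 * σ ^ 2)
    refine this.congr_deriv ?_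
    field_simp
    ring
  have hh1 : ∀ x : ℝ, HasDerivAt
      (fun x : ℝ => (x * σβ + κ * σ * (βbar - x)) / σ) ((σβ - κ * σ) / σ) x := by
    intro x
    have h' : HasDerivAt (fun x : ℝ => βbar - x) (-1 : ℝ) x := by
      simpa using (hasDerivAt_id x).const_sub βbar
    have := (((hasDerivAt_id x).mul_const σβ).add (h'.const_mul (κ * σ))).div_const σ
    refine this.congr_deriv ?_
    ring
  -- inner bracket
  have hinner : lieBracketVF (driftVF σ σβ κ βbar δ r) (diffusionVF σ σβ)
      = fun q : ℝ × ℝ => (q.1 * (κ * (q.2 - βbar) / σ), (fun _ : ℝ => σβ * (σβ - κ * σ) / σ) q.2) := by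
    funext q
    rw [hdrift, hdiff, bracketF _ _ _ _ _ _ _ _ hg1 hh1 hg2 hh2 q]
    simp only [Prod.mk.injEq]
    constructor <;> (field_simp; ring)
  have hG : ∀ x : ℝ, HasDerivAt (fun x : ℝ => κ * (x - βbar) / σ) (κ / σ) x := by
    intro x
    have := (((hasDerivAt_id x).sub_const βbar).const_mul κ).div_const σ
    refine this.congr_deriv ?_
    ring
  have hH : ∀ x : ℝ, HasDerivAt (fun _ : ℝ => σβ * (σβ - κ * σ) / σ) (0 : ℝ) x :=
    fun x => hasDerivAt_const x _
  rw [hinner, hdiff, bracketF _ _ _ _ _ _ _ _ hg2 hh2 hG hH p]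
  simp [Prod.ext_iff]
  field_simp
  ring


/-- The iterated Lie bracket `[V¹,[V⁰,V¹]]` equals `( -(σ_β z/σ²)(2κσ - σ_β), 0 )`; the
determinant of the matrix with columns `V¹` and `[V¹,[V⁰,V¹]]` equals
`-(σ_β² z/σ²)(2κσ - σ_β)`; and if `κσ > σ_β` and `z > 0` the determinant is negative and
the two vectors are linearly independent and span `ℝ²` (Hörmander's condition). -/
theorem stmt2 (σ σβ κ βbar δ r : ℝ) (hσ : 0 < σ) (hσβ : 0 < σβ) (hκ : 0 < κ)
    (p : ℝ × ℝ) :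
    lieBracketVF (diffusionVF σ σβ)
        (lieBracketVF (driftVF σ σβ κ βbar δ r) (diffusionVF σ σβ)) p
      = (-(σβ * p.1 / σ ^ 2) * (2 * κ * σ - σβ), 0) ∧
    (Matrix.det
        !![(diffusionVF σ σβ p).1,
            (lieBracketVF (diffusionVF σ σβ)
              (lieBracketVF (driftVF σ σβ κ βbar δ r) (diffusionVF σ σβ)) p).1;
          (diffusionVF σ σβ p).2,
            (lieBracketVF (diffusionVF σ σβ)
              (lieBracketVF (driftVF σ σβ κ βbar δ r) (diffusionVF σ σβ)) p).2]
      = -(σβ ^ 2 * p.1 / σ ^ 2) * (2 * κ * σ - σβ)) ∧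
    (σβ < κ * σ → 0 < p.1 →
      Matrix.det
        !![(diffusionVF σ σβ p).1,
            (lieBracketVF (diffusionVF σ σβ)
              (lieBracketVF (driftVF σ σβ κ βbar δ r) (diffusionVF σ σβ)) p).1;
          (diffusionVF σ σβ p).2,
            (lieBracketVF (diffusionVF σ σβ)
              (lieBracketVF (driftVF σ σβ κ βbar δ r) (diffusionVF σ σβ)) p).2] < 0 ∧
      LinearIndependent ℝ
        ![diffusionVF σ σβ p,
          lieBracketVF (diffusionVF σ σβ)
            (lieBracketVF (driftVF σ σβ κ βbar δ r) (diffusionVF σ σβ)) p] ∧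
      Submodule.span ℝ
        {diffusionVF σ σβ p,
          lieBracketVF (diffusionVF σ σβ)
            (lieBracketVF (driftVF σ σβ κ βbar δ r) (diffusionVF σ σβ)) p} = ⊤) := by
  have hσ' : σ ≠ 0 := ne_of_gt hσ
  have hW := iteratedBracket σ σβ κ βbar δ r hσ' p
  have hdet :
      Matrix.det
        !![(diffusionVF σ σβ p).1,
            (lieBracketVF (diffusionVF σ σβ)
              (lieBracketVF (driftVF σ σβ κ βbar δ r) (diffusionVF σ σβ)) p).1;
          (diffusionVF σ σβ p).2,
            (lieBracketVF (diffusionVF σ σβ)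
              (lieBracketVF (driftVF σ σβ κ βbar δ r) (diffusionVF σ σβ)) p).2]
      = -(σβ ^ 2 * p.1 / σ ^ 2) * (2 * κ * σ - σβ) := by
    rw [hW]
    simp [diffusionVF, Matrix.det_fin_two_of]
    ring
  refine ⟨hW, hdet, ?_⟩
  intro h1 h2
  have hpos : 0 < 2 * κ * σ - σβ := by nlinarith
  have hA : 0 < σβ * p.1 / σ ^ 2 := by positivity
  have hw1 : -(σβ * p.1 / σ ^ 2) * (2 * κ * σ - σβ) ≠ 0 := by nlinarith [mul_pos hA hpos]
  refine ⟨?_, ?_, ?_⟩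
  · rw [hdet]
    have hA2 : 0 < σβ ^ 2 * p.1 / σ ^ 2 := by positivity
    nlinarith [mul_pos hA2 hpos]
  · rw [hW, linearIndependent_fin2]
    constructor
    · exact fun h => hw1 (by simpa using congrArg Prod.fst h)
    · intro a h
      have h2' := congrArg Prod.snd h
      simp [diffusionVF] at h2'
      linarith
  · rw [hW, eq_top_iff]
    rintro ⟨x, y⟩ -
    rw [Submodule.mem_span_pair]
    refine ⟨-y / σβ,
      (x - (-y / σβ) * (diffusionVF σ σβ p).1) / (-(σβ * p.1 / σ ^ 2) * (2 * κ * σ - σβ)), ?_⟩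
    simp only [diffusionVF, Prod.smul_mk, Prod.mk_add_mk, Prod.mk.injEq, smul_eq_mul]
    constructor
    · have hq : 2 * κ * σ - σβ ≠ 0 := hpos.ne'
      field_simp
      have hq' : -σβ + σ * κ * 2 ≠ 0 := (by nlinarith : (0:ℝ) < -σβ + σ * κ * 2).ne'
      linear_combination (σβ * σ * x - y * p.2 * p.1) * mul_inv_cancel₀ hq'
    · field_simp
      simp
end

section
/- Let v : (0,∞) × ℝ → ℝ be continuous, with v(z,β) ≤ 0 for all (z,β), and such that z ↦ v(z,β) is nondecreasing for every β ∈ ℝ. Define z*(β) := inf{ z > 0 : v(z,β) ≥ 0 } ∈ [0,∞] (with inf ∅ = +∞). Then { (z,β) ∈ (0,∞)×ℝ : v(z,β) = 0 } = { (z,β) ∈ (0,∞)×ℝ : z ≥ z*(β) }, the set { (z,β) : v(z,β) < 0 } equals { (z,β) : z < z*(β) }, and the function β ↦ z*(β) is lower semicontinuous on ℝ. -/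
open scoped ENNReal

/-- Free-boundary structure: for a continuous, nonpositive value function `v` on
`(0,∞) × ℝ` that is nondecreasing in `z`, the boundary
`z*(β) = inf{z > 0 : v(z,β) ≥ 0} ∈ [0,∞]` (with `inf ∅ = ∞`) separates the stopping
region `{v = 0} = {z ≥ z*(β)}` from the continuation region `{v < 0} = {z < z*(β)}`,
and `z*` is lower semicontinuous. -/
theorem stmt3 (v : ℝ → ℝ → ℝ)
    (hcont : ContinuousOn (fun p : ℝ × ℝ => v p.1 p.2) (Set.Ioi 0 ×ˢ Set.univ))
    (hnonpos : ∀ z β : ℝ, 0 < z → v z β ≤ 0)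
    (hmono : ∀ β : ℝ, MonotoneOn (fun z => v z β) (Set.Ioi 0))
    (zstar : ℝ → ℝ≥0∞)
    (hzstar : ∀ β : ℝ, zstar β = sInf (ENNReal.ofReal '' {z : ℝ | 0 < z ∧ 0 ≤ v z β})) :
    ({p : ℝ × ℝ | 0 < p.1 ∧ v p.1 p.2 = 0}
        = {p : ℝ × ℝ | 0 < p.1 ∧ zstar p.2 ≤ ENNReal.ofReal p.1}) ∧
    ({p : ℝ × ℝ | 0 < p.1 ∧ v p.1 p.2 < 0}
        = {p : ℝ × ℝ | 0 < p.1 ∧ ENNReal.ofReal p.1 < zstar p.2}) ∧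
    LowerSemicontinuous zstar := by
  -- continuity at each point of the open set
  have hopen : IsOpen ((Set.Ioi (0:ℝ)) ×ˢ (Set.univ : Set ℝ)) :=
    isOpen_Ioi.prod isOpen_univ
  have hCA : ∀ z β : ℝ, 0 < z →
      ContinuousAt (fun p : ℝ × ℝ => v p.1 p.2) (z, β) := by
    intro z β hz
    exact hcont.continuousAt (hopen.mem_nhds ⟨hz, trivial⟩)
  -- Key lemma
  have key : ∀ z β : ℝ, 0 < z → (zstar β ≤ ENNReal.ofReal z ↔ v z β = 0) := by
    intro z β hz
    constructor
    · intro h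
      -- first show v z' β = 0 for all z' > z
      have hzero : ∀ z' : ℝ, z < z' → v z' β = 0 := by
        intro z' hzz'
        have hz' : 0 < z' := hz.trans hzz'
        have hlt : sInf (ENNReal.ofReal '' {w : ℝ | 0 < w ∧ 0 ≤ v w β})
            < ENNReal.ofReal z' := by
          rw [← hzstar β]
          exact lt_of_le_of_lt h ((ENNReal.ofReal_lt_ofReal_iff hz').mpr hzz')
        obtain ⟨e, ⟨w, ⟨hw0, hwv⟩, rfl⟩, hew⟩ := sInf_lt_iff.mp hlt
        have hwz' : w < z' := by
          by_contra hle
          exact absurd (ENNReal.ofReal_le_ofReal (not_lt.mp hle)) (not_le.mpr hew)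
        have := hmono β (Set.mem_Ioi.mpr hw0) (Set.mem_Ioi.mpr hz') hwz'.le
        exact le_antisymm (hnonpos z' β hz') (hwv.trans this)
      -- now take the limit z' → z⁺
      have hg : ContinuousAt (fun z' : ℝ => ((z', β) : ℝ × ℝ)) z :=
        (continuous_id.prodMk continuous_const).continuousAt
      have hca : ContinuousAt (fun z' => v z' β) z :=
        Filter.Tendsto.comp (hCA z β hz) hg
      have h1 : Filter.Tendsto (fun z' => v z' β) (nhdsWithin z (Set.Ioi z))
          (nhds (v z β)) := hca.continuousWithinAt.tendsto
      have h2 : Filter.Tendsto (fun z' => v z' β) (nhdsWithin z (Set.Ioi z))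
          (nhds 0) := by
        apply Filter.Tendsto.congr' _ tendsto_const_nhds
        filter_upwards [self_mem_nhdsWithin] with z' hz'
        exact (hzero z' hz').symm
      exact tendsto_nhds_unique h1 h2
    · intro h
      rw [hzstar β]
      exact sInf_le ⟨z, ⟨hz, h.ge⟩, rfl⟩
  have key' : ∀ z β : ℝ, 0 < z → (ENNReal.ofReal z < zstar β ↔ v z β < 0) := by
    intro z β hz
    rw [lt_iff_not_ge]
    exact ⟨fun h => lt_of_le_of_ne (hnonpos z β hz)
        (fun he => h ((key z β hz).mpr he)),
      fun h hle => absurd ((key z β hz).mp hle) h.ne⟩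
  refine ⟨?_, ?_, ?_⟩
  · ext ⟨z, β⟩
    simp only [Set.mem_setOf_eq]
    exact ⟨fun ⟨hz, h⟩ => ⟨hz, (key z β hz).mpr h⟩,
      fun ⟨hz, h⟩ => ⟨hz, (key z β hz).mp h⟩⟩
  · ext ⟨z, β⟩
    simp only [Set.mem_setOf_eq]
    constructor
    · rintro ⟨hz, h⟩
      refine ⟨hz, (key' z β hz).mpr h⟩
    · rintro ⟨hz, h⟩
      exact ⟨hz, (key' z β hz).mp h⟩
  · intro β c hc
    obtain ⟨d, hcd, hdz⟩ := exists_between hc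
    have hd0 : d ≠ 0 := by rintro rfl; exact (zero_le : (0 : ℝ≥0∞) ≤ c).not_gt hcd
    have hdT : d ≠ ⊤ := (hdz.trans_le le_top).ne
    set z := d.toReal with hzdef
    have hz : 0 < z := ENNReal.toReal_pos hd0 hdT
    have hdz' : ENNReal.ofReal z = d := ENNReal.ofReal_toReal hdT
    have hvz : v z β < 0 := (key' z β hz).mp (hdz' ▸ hdz)
    have hg : ContinuousAt (fun β' : ℝ => ((z, β') : ℝ × ℝ)) β :=
      (continuous_const.prodMk continuous_id).continuousAt
    have hca : ContinuousAt (fun β' => v z β') β :=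
      Filter.Tendsto.comp (g := fun p : ℝ × ℝ => v p.1 p.2) (hCA z β hz) hg
    filter_upwards [hca (Iio_mem_nhds hvz)] with β' hβ'
    have : ENNReal.ofReal z < zstar β' := (key' z β' hz).mpr hβ'
    exact hcd.trans (hdz' ▸ this)
end

section
/- Let z* : ℝ → (0,∞] be lower semicontinuous, let b : [0,∞) → ℝ be continuous, and let Z : [0,∞) → (0,∞) be continuous. Define h(t) := inf_{0 ≤ s ≤ t} min( z*(b_s)/Z_s , 1 ) for t ≥ 0. Then h is nonincreasing and right-continuous on [0,∞) (hence càdlàg, since nonincreasing functions admit left limits). -/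
open scoped ENNReal

private lemma key_lsc (zstar : ℝ → ℝ≥0∞)
    (hlsc : LowerSemicontinuous zstar)
    (b Z : ℝ → ℝ)
    (hb : ContinuousOn b (Set.Ici 0))
    (hZ : ContinuousOn Z (Set.Ici 0))
    (hZpos : ∀ s ∈ Set.Ici (0 : ℝ), 0 < Z s)
    (t : ℝ) (ht : t ∈ Set.Ici (0 : ℝ)) (a : ℝ≥0∞)
    (ha : a < min (zstar (b t) / ENNReal.ofReal (Z t)) 1) :
    ∀ᶠ s in nhdsWithin t (Set.Ici 0),
      a < min (zstar (b s) / ENNReal.ofReal (Z s)) 1 := by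
  rw [lt_min_iff] at ha
  obtain ⟨ha1, ha2⟩ := ha
  have hc0 : ENNReal.ofReal (Z t) ≠ 0 := (ENNReal.ofReal_pos.2 (hZpos t ht)).ne'
  have hct : ENNReal.ofReal (Z t) ≠ ∞ := ENNReal.ofReal_ne_top
  have hmul : a * ENNReal.ofReal (Z t) < zstar (b t) :=
    (ENNReal.lt_div_iff_mul_lt (Or.inl hc0) (Or.inl hct)).1 ha1
  obtain ⟨m, hm1, hm2⟩ := exists_between hmul
  have E1 : ∀ᶠ s in nhdsWithin t (Set.Ici 0), m < zstar (b s) :=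
    (hb t ht).eventually (hlsc (b t) m hm2)
  have htend : Filter.Tendsto (fun s => a * ENNReal.ofReal (Z s))
      (nhdsWithin t (Set.Ici 0)) (nhds (a * ENNReal.ofReal (Z t))) := by
    refine ENNReal.Tendsto.const_mul ?_ (Or.inl hc0)
    exact (ENNReal.continuous_ofReal.tendsto _).comp (hZ t ht)
  have E2 : ∀ᶠ s in nhdsWithin t (Set.Ici 0), a * ENNReal.ofReal (Z s) < m :=
    htend.eventually_lt_const hm1
  have E3 : ∀ᶠ s in nhdsWithin t (Set.Ici 0), s ∈ Set.Ici (0 : ℝ) :=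
    self_mem_nhdsWithin
  filter_upwards [E1, E2, E3] with s h1 h2 h3
  refine lt_min ?_ ha2
  have hs0 : ENNReal.ofReal (Z s) ≠ 0 := (ENNReal.ofReal_pos.2 (hZpos s h3)).ne'
  exact (ENNReal.lt_div_iff_mul_lt (Or.inl hs0) (Or.inl ENNReal.ofReal_ne_top)).2
    (h2.trans h1)

/-- Pathwise regularity of the optimal singular control: with `z* : ℝ → (0,∞]` lower
semicontinuous, `b` continuous on `[0,∞)` and `Z` continuous and positive on `[0,∞)`,
the running infimum `h(t) = inf_{0≤s≤t} min(z*(b_s)/Z_s, 1)` is nonincreasing and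
right-continuous on `[0,∞)`. -/
theorem stmt7 (zstar : ℝ → ℝ≥0∞) (hzpos : ∀ β : ℝ, 0 < zstar β)
    (hlsc : LowerSemicontinuous zstar)
    (b Z : ℝ → ℝ)
    (hb : ContinuousOn b (Set.Ici 0))
    (hZ : ContinuousOn Z (Set.Ici 0))
    (hZpos : ∀ s ∈ Set.Ici (0 : ℝ), 0 < Z s)
    (h : ℝ → ℝ≥0∞)
    (hh : ∀ t : ℝ,
      h t = ⨅ s ∈ Set.Icc (0 : ℝ) t, min (zstar (b s) / ENNReal.ofReal (Z s)) 1) :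
    AntitoneOn h (Set.Ici 0) ∧
    ∀ t ∈ Set.Ici (0 : ℝ), ContinuousWithinAt h (Set.Ici t) t := by
  set g : ℝ → ℝ≥0∞ := fun s => min (zstar (b s) / ENNReal.ofReal (Z s)) 1 with hg
  have hmono : AntitoneOn h (Set.Ici 0) := by
    intro t1 ht1 t2 ht2 h12
    rw [hh t1, hh t2]
    exact le_iInf₂ fun u hu => iInf₂_le u ⟨hu.1, hu.2.trans h12⟩
  refine ⟨hmono, fun t ht => ?_⟩
  have hle : ∀ u ∈ Set.Icc (0 : ℝ) t, h t ≤ g u := by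
    intro u hu
    rw [hh t]
    exact iInf₂_le u hu
  rw [ContinuousWithinAt]
  refine tendsto_order.2 ⟨fun a ha => ?_, fun a ha => ?_⟩
  · -- lower bound
    obtain ⟨a', ha'1, ha'2⟩ := exists_between ha
    have hgt : a' < g t := ha'2.trans_le (hle t ⟨ht, le_rfl⟩)
    have hev : ∀ᶠ s in nhdsWithin t (Set.Ici 0), a' < g s :=
      key_lsc zstar hlsc b Z hb hZ hZpos t ht a' hgt
    obtain ⟨δ, hδ, hδ'⟩ := Metric.mem_nhdsWithin_iff.1 hev
    have hball : ∀ᶠ s in nhdsWithin t (Set.Ici t), dist s t < δ :=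
      Filter.Eventually.filter_mono nhdsWithin_le_nhds
        (Filter.eventually_iff_exists_mem.2 ⟨Metric.ball t δ, Metric.ball_mem_nhds t hδ, fun x hx => hx⟩)
    filter_upwards [hball, self_mem_nhdsWithin] with s hs1 hs2
    have hhs : a' ≤ h s := by
      rw [hh s]
      refine le_iInf₂ fun u hu => ?_
      rcases le_or_gt u t with hut | htu
      · exact ha'2.le.trans (hle u ⟨hu.1, hut⟩)
      · refine (hδ' ⟨?_, hu.1⟩).le
        have hst : |s - t| < δ := by rw [Real.dist_eq] at hs1; exact hs1
        have h1 : s - t < δ := lt_of_le_of_lt (le_abs_self _) hst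
        simp only [Metric.mem_ball, Real.dist_eq]
        rw [abs_of_nonneg (by linarith)]
        linarith [hu.2]
    exact ha'1.trans_le hhs
  · -- upper bound
    filter_upwards [self_mem_nhdsWithin] with s hs
    exact (hmono ht (Set.mem_Ici.2 (le_trans (Set.mem_Ici.1 ht) (Set.mem_Ici.1 hs))) hs).trans_lt ha
end
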